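/- Let B be a symmetric bilinear form on V and l ∈ V a null vector. Then B is nilpotent with respect to l if and only if there exists a linear functional α : V → ℝ with α(l) = 0 such that B(v,w) = g(l,v)·α(w) + α(v)·g(l,w) for all v,w ∈ V. -/

import Mathlib

/-- Let `B` be a symmetric bilinear form on a Lorentzian vector space `(V, g)`
and `l` a null vector.  Then `B` is nilpotent with respect to `l` (i.e. `B l z = 0` for all
`z` and `B w w' = 0` for all `w, w' ∈ {l}⊥`) iff there is a linear functional `α` with
`α l = 0` and `B v w = g l v * α w + α v * g l w` for all `v, w`. -/
theorem stmt5 {V : Type*} [AddCommGroup V] [Module ℝ V]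
    {n : ℕ} (hn : 2 ≤ n)
    (g : V →ₗ[ℝ] V →ₗ[ℝ] ℝ)
    (hg_symm : ∀ x y : V, g x y = g y x)
    (b : Module.Basis (Fin n) ℝ V)
    (hb : ∀ i j : Fin n, g (b i) (b j) =
      if i = j then (if (i : ℕ) = 0 then (-1 : ℝ) else 1) else 0)
    (B : V →ₗ[ℝ] V →ₗ[ℝ] ℝ)
    (hB_symm : ∀ x y : V, B x y = B y x)
    (l : V) (hl : l ≠ 0 ∧ g l l = 0) :
    ((∀ z : V, B l z = 0) ∧
        (∀ w w' : V, g l w = 0 → g l w' = 0 → B w w' = 0)) ↔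
      ∃ α : V →ₗ[ℝ] ℝ, α l = 0 ∧
        ∀ v w : V, B v w = g l v * α w + α v * g l w := by
  obtain ⟨hl0, hll⟩ := hl
  constructor
  · rintro ⟨h1, h2⟩
    -- find u0 with g l u0 ≠ 0
    have hrep : b.repr l ≠ 0 := fun h => hl0 (by
      have := b.repr.injective (a₁ := l) (a₂ := 0)
      simp only [map_zero] at this
      exact this h)
    obtain ⟨j, hj⟩ := Finsupp.ne_iff.mp hrep
    simp only [Finsupp.coe_zero, Pi.zero_apply] at hj
    have hsum : (∑ i, b.repr l i • b i) = l := b.sum_repr l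
    have hgj : g l (b j) ≠ 0 := by
      rw [hg_symm]
      have : g (b j) l = ∑ i, b.repr l i * g (b j) (b i) := by
        rw [← hsum, map_sum]
        simp [mul_comm]
      rw [this]
      rw [Finset.sum_eq_single j]
      · rw [hb j j]
        simp only [if_pos rfl]
        by_cases h0 : (j : ℕ) = 0 <;> simp [h0, hj]
      · intro i _ hij
        rw [hb j i, if_neg (fun h => hij h.symm), mul_zero]
      · intro h; exact absurd (Finset.mem_univ j) h
    set u : V := (g l (b j))⁻¹ • b j with hu
    have hglu : g l u = 1 := by
      rw [hu, map_smul, smul_eq_mul, inv_mul_cancel₀ hgj]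
    refine ⟨(B u) - (B u u / 2) • (g l), ?_, ?_⟩
    · simp only [LinearMap.sub_apply, LinearMap.smul_apply, smul_eq_mul, hll, mul_zero,
        sub_zero]
      rw [hB_symm]; exact h1 u
    · intro v w
      set p : V := v - g l v • u with hp
      set q : V := w - g l w • u with hq
      have hgp : g l p = 0 := by
        rw [hp, map_sub, map_smul, smul_eq_mul, hglu, mul_one, sub_self]
      have hgq : g l q = 0 := by
        rw [hq, map_sub, map_smul, smul_eq_mul, hglu, mul_one, sub_self]
      have hpq : B p q = 0 := h2 p q hgp hgq
      have hexp : B p q = B v w - g l w * B v u - g l v * B u w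
          + g l v * g l w * B u u := by
        rw [hp, hq]
        simp only [map_sub, map_smul, LinearMap.sub_apply, LinearMap.smul_apply,
          smul_eq_mul]
        ring
      rw [hexp] at hpq
      simp only [LinearMap.sub_apply, LinearMap.smul_apply, smul_eq_mul]
      linear_combination hpq + g l w * hB_symm v u
  · rintro ⟨α, hαl, hα⟩
    constructor
    · intro z; rw [hα l z, hll, hαl]; ring
    · intro w w' hw hw'; rw [hα w w', hw, hw']; ring
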